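/- arXiv:2604.10282 — 6 statements merged into one kernel-verified Lean document; each statement's English description precedes it below -/
import Mathlib

section
/- Let G be a Polish group and let H be a subgroup of G which is meagre as a subset of G. Then the index of H in G is 2^ℵ₀, i.e. the set G/H of left cosets of H has cardinality equal to the continuum. -/
open Set Metric Filter Pointwise Topology


lemma my_interior_union_empty {X : Type*} [TopologicalSpace X] {s t : Set X} (hs : IsClosed s)
    (h1 : interior s = ∅) (h2 : interior t = ∅) : interior (s ∪ t) = ∅ := by
  have key : interior (s ∪ t) \ s ⊆ interior t := by
    rw [(isOpen_interior.sdiff hs).subset_interior_iff]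
    intro x hx
    rcases interior_subset hx.1 with h | h
    · exact absurd h hx.2
    · exact h
  rw [h2, subset_empty_iff, diff_eq_empty] at key
  have h3 : interior (s ∪ t) ⊆ interior s := interior_maximal key isOpen_interior
  rw [h1, subset_empty_iff] at h3
  exact h3

section Grp
variable {G : Type*} [Group G] [MetricSpace G] [IsTopologicalGroup G]

lemma my_nwd_smul (g : G) {F : Set G} (h : IsNowhereDense F) : IsNowhereDense (g • F) := by
  unfold IsNowhereDense at *
  rw [closure_smul, interior_smul, h, Set.smul_set_empty]

lemma my_nwd_inv {F : Set G} (h : IsNowhereDense F) : IsNowhereDense F⁻¹ := by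
  unfold IsNowhereDense at *
  rw [← inv_closure]
  have : (closure F)⁻¹ = (Homeomorph.inv G) ⁻¹' (closure F) := rfl
  rw [this, ← Homeomorph.preimage_interior, h]
  simp

lemma my_isMeagre_of_nwd {X : Type*} [TopologicalSpace X] {s : Set X} (h : IsNowhereDense s) :
    IsMeagre s :=
  isMeagre_iff_countable_union_isNowhereDense.2
    ⟨{s}, by simpa, countable_singleton _, by simp⟩

lemma my_isMeagre_iUnion {X ι : Type*} [TopologicalSpace X] [Countable ι] {s : ι → Set X}
    (h : ∀ i, IsMeagre (s i)) : IsMeagre (⋃ i, s i) := by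
  rw [IsMeagre, compl_iUnion]
  exact countable_iInter_mem.2 h

variable [BaireSpace G]

lemma my_exists_points {F : Set G} (hnwd : IsNowhereDense F) :
    ∀ (m : ℕ) (c : Fin m → G) (r : Fin m → ℝ), (∀ a, 0 < r a) →
    ∃ p : Fin m → G, (∀ a, dist (p a) (c a) < r a) ∧
      ∀ a b, a ≠ b → (p a)⁻¹ * p b ∉ F := by
  intro m
  induction m with
  | zero => exact fun c r hr => ⟨fun _ => 1, fun a => a.elim0, fun a => a.elim0⟩
  | succ m ih =>
    intro c r hr
    obtain ⟨p', hp1, hp2⟩ := ih (fun a => c a.castSucc) (fun a => r a.castSucc) (fun a => hr _)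
    set B : Set G := ⋃ b : Fin m, (p' b • F ∪ p' b • F⁻¹) with hB
    have hmea : IsMeagre B := my_isMeagre_iUnion fun b => by
      have h1 : IsMeagre (p' b • F) := my_isMeagre_of_nwd (my_nwd_smul _ hnwd)
      have h2 : IsMeagre (p' b • F⁻¹) := my_isMeagre_of_nwd (my_nwd_smul _ (my_nwd_inv hnwd))
      rw [IsMeagre, compl_union]
      exact Filter.inter_mem h1 h2
    have hdense : Dense Bᶜ := dense_of_mem_residual hmea
    obtain ⟨q, hq1, hq2⟩ :=
      hdense.inter_open_nonempty _ isOpen_ball (nonempty_ball.2 (hr (Fin.last m)))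
    rw [mem_compl_iff, hB, mem_iUnion] at hq2
    push_neg at hq2
    have hq2' : ∀ b : Fin m, q ∉ p' b • F ∧ q ∉ p' b • F⁻¹ := by
      intro b
      have := hq2 b
      rw [mem_union] at this
      push_neg at this
      exact this
    refine ⟨Fin.snoc p' q, ?_, ?_⟩
    · intro a
      refine Fin.lastCases ?_ (fun j => ?_) a
      · simpa [Fin.snoc_last] using hq1
      · simpa [Fin.snoc_castSucc] using hp1 j
    · intro a b hab
      rcases Fin.eq_castSucc_or_eq_last a with ⟨i, rfl⟩ | rfl <;>
        rcases Fin.eq_castSucc_or_eq_last b with ⟨j, rfl⟩ | rfl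
      · simp only [Fin.snoc_castSucc]
        exact hp2 i j (fun h => hab (congrArg Fin.castSucc h))
      · -- a = castSucc i, b = last : (p' i)⁻¹ * q ∉ F
        simp only [Fin.snoc_last, Fin.snoc_castSucc]
        intro hmemF
        apply (hq2' i).1
        rw [mem_smul_set_iff_inv_smul_mem, smul_eq_mul]
        exact hmemF
      · -- a = last, b = castSucc j : q⁻¹ * p' j ∉ F
        simp only [Fin.snoc_last, Fin.snoc_castSucc]
        intro hmemF
        apply (hq2' j).2
        rw [mem_smul_set_iff_inv_smul_mem, smul_eq_mul, Set.mem_inv]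
        simpa using hmemF
      · exact absurd rfl hab

lemma my_exists_points' {ι : Type*} [Fintype ι] {F : Set G} (hnwd : IsNowhereDense F)
    (c : ι → G) (r : ι → ℝ) (hr : ∀ a, 0 < r a) :
    ∃ p : ι → G, (∀ a, dist (p a) (c a) < r a) ∧
      ∀ a b, a ≠ b → (p a)⁻¹ * p b ∉ F := by
  let e := Fintype.equivFin ι
  obtain ⟨p, h1, h2⟩ := my_exists_points hnwd (Fintype.card ι)
    (fun a => c (e.symm a)) (fun a => r (e.symm a)) (fun a => hr _)
  refine ⟨fun a => p (e a), fun a => by simpa using h1 (e a), fun a b hab => by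
    simpa using h2 (e a) (e b) (fun h => hab (e.injective h))⟩

lemma my_exists_delta {ι : Type*} [Finite ι] {F : Set G} (hF : IsClosed F)
    (p : ι → G) (hsep : ∀ a b, a ≠ b → (p a)⁻¹ * p b ∉ F) (c : ι → G) (r : ι → ℝ)
    (hmem : ∀ a, dist (p a) (c a) < r a) (η : ℝ) (hη : 0 < η) :
    ∃ δ : ℝ, 0 < δ ∧ δ ≤ η ∧ (∀ a, closedBall (p a) δ ⊆ ball (c a) (r a)) ∧
      ∀ a b, a ≠ b → ∀ u v, dist u (p a) ≤ δ → dist v (p b) ≤ δ → u⁻¹ * v ∉ F := by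
  have E1 : ∀ a : ι, ∀ᶠ δ in 𝓝[>] (0:ℝ), closedBall (p a) δ ⊆ ball (c a) (r a) := by
    intro a
    have hpos : 0 < r a - dist (p a) (c a) := by linarith [hmem a]
    filter_upwards [Ioo_mem_nhdsGT_of_mem (by constructor <;> [rfl; exact hpos] :
        (0:ℝ) ∈ Set.Ico 0 (r a - dist (p a) (c a)))] with δ hδ u hu
    rw [mem_closedBall] at hu
    rw [mem_ball]
    calc dist u (c a) ≤ dist u (p a) + dist (p a) (c a) := dist_triangle _ _ _
      _ < r a := by linarith [hδ.2, hu]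
  have E2 : ∀ a b : ι, ∀ᶠ δ in 𝓝[>] (0:ℝ), a ≠ b →
      ∀ u v, dist u (p a) ≤ δ → dist v (p b) ≤ δ → u⁻¹ * v ∉ F := by
    intro a b
    by_cases hab : a ≠ b
    · have hopen : IsOpen ((fun q : G × G => q.1⁻¹ * q.2) ⁻¹' Fᶜ) :=
        hF.isOpen_compl.preimage (by continuity)
      have hmemU : ((p a, p b) : G × G) ∈ (fun q : G × G => q.1⁻¹ * q.2) ⁻¹' Fᶜ :=
        hsep a b hab
      obtain ⟨ε, hε, hball⟩ := Metric.isOpen_iff.1 hopen _ hmemU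
      filter_upwards [Ioo_mem_nhdsGT_of_mem (by constructor <;> [rfl; exact half_pos hε] :
          (0:ℝ) ∈ Set.Ico 0 (ε/2))] with δ hδ _ u v hu hv
      have : ((u, v) : G × G) ∈ ball ((p a, p b) : G × G) ε := by
        rw [mem_ball, Prod.dist_eq]
        simp only [max_lt_iff]
        constructor <;> [linarith [hδ.2, hu]; linarith [hδ.2, hv]]
      exact hball this
    · exact Filter.Eventually.of_forall fun δ h => absurd h hab
  have E3 : ∀ᶠ δ in 𝓝[>] (0:ℝ), 0 < δ ∧ δ ≤ η := by
    filter_upwards [Ioo_mem_nhdsGT_of_mem (by constructor <;> [rfl; exact hη] :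
        (0:ℝ) ∈ Set.Ico 0 η), self_mem_nhdsWithin] with δ hδ hδ'
    exact ⟨hδ', le_of_lt hδ.2⟩
  have := (E3.and ((eventually_all.2 E1).and
    (eventually_all.2 fun a => eventually_all.2 (E2 a))))
  obtain ⟨δ, ⟨h0, h1⟩, h2, h3⟩ := this.exists
  exact ⟨δ, h0, h1, h2, fun a b hab => h3 a b hab⟩


lemma my_res_succ (x : ℕ → Bool) (n : ℕ) :
    (fun k : Fin (n+1) => x ↑k) = Fin.snoc (fun k : Fin n => x ↑k) (x n) := by
  funext k
  rcases Fin.eq_castSucc_or_eq_last k with ⟨j, rfl⟩ | rfl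
  · simp [Fin.snoc_castSucc]
  · simp [Fin.snoc_last]

lemma my_step {F : ℕ → Set G} (hcl : ∀ n, IsClosed (F n)) (hnwd : ∀ n, IsNowhereDense (F n))
    (n : ℕ) (g : (Fin n → Bool) → G) (ε : ℝ) (hε : 0 < ε) :
    ∃ (g' : (Fin (n+1) → Bool) → G) (ε' : ℝ), 0 < ε' ∧ ε' ≤ (1/2)^(n+1) ∧
      (∀ s t, s ≠ t → ∀ u v, dist u (g' s) ≤ ε' → dist v (g' t) ≤ ε' → u⁻¹ * v ∉ F (n+1)) ∧
      (∀ s i, closedBall (g' (Fin.snoc s i)) ε' ⊆ closedBall (g s) ε) := by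
  obtain ⟨p, hp1, hp2⟩ := my_exists_points' (ι := (Fin n → Bool) × Bool) (hnwd (n+1))
    (fun si => g si.1) (fun _ => ε) (fun _ => hε)
  obtain ⟨δ, hδ0, hδη, hδball, hδsep⟩ := my_exists_delta (hcl (n+1)) p hp2
    (fun si => g si.1) (fun _ => ε) hp1 ((1/2)^(n+1)) (by positivity)
  refine ⟨fun t => p (Fin.init t, t (Fin.last n)), δ, hδ0, hδη, ?_, ?_⟩
  · intro s t hst u v hu hv
    refine hδsep _ _ ?_ u v hu hv
    intro h
    apply hst
    rw [Prod.mk.injEq] at h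
    rw [← Fin.snoc_init_self s, ← Fin.snoc_init_self t, h.1, h.2]
  · intro s i
    simp only [Fin.init_snoc, Fin.snoc_last]
    exact (hδball (s, i)).trans ball_subset_closedBall

variable [CompleteSpace G]

lemma my_exists_Phi {F : ℕ → Set G} (hcl : ∀ n, IsClosed (F n))
    (hnwd : ∀ n, IsNowhereDense (F n)) (hmono : Monotone F) :
    ∃ Φ : (ℕ → Bool) → G, ∀ x y : ℕ → Bool, x ≠ y → (Φ x)⁻¹ * Φ y ∉ ⋃ n, F n := by
  choose g' ε' h1 h2 h3 h4 using fun n (g : (Fin n → Bool) → G) (ε : ℝ) (hε : 0 < ε) =>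
    my_step hcl hnwd n g ε hε
  let D : ∀ n, Σ' (g : (Fin n → Bool) → G) (ε : ℝ), 0 < ε := fun n =>
    Nat.rec ⟨fun _ => 1, 1, one_pos⟩ (fun n d => ⟨g' n d.1 d.2.1 d.2.2, ε' n d.1 d.2.1 d.2.2,
      h1 n d.1 d.2.1 d.2.2⟩) n
  have hpos : ∀ n, 0 < (D n).2.1 := fun n => (D n).2.2
  have hle : ∀ n, (D (n+1)).2.1 ≤ (1/2)^(n+1) :=
    fun n => h2 n (D n).1 (D n).2.1 (D n).2.2
  have hsep : ∀ n, ∀ s t, s ≠ t → ∀ u v, dist u ((D (n+1)).1 s) ≤ (D (n+1)).2.1 →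
      dist v ((D (n+1)).1 t) ≤ (D (n+1)).2.1 → u⁻¹ * v ∉ F (n+1) :=
    fun n => h3 n (D n).1 (D n).2.1 (D n).2.2
  have hnest : ∀ n s i, closedBall ((D (n+1)).1 (Fin.snoc s i)) (D (n+1)).2.1 ⊆
      closedBall ((D n).1 s) (D n).2.1 :=
    fun n => h4 n (D n).1 (D n).2.1 (D n).2.2
  set u : (ℕ → Bool) → ℕ → G := fun x n => (D n).1 (fun k : Fin n => x ↑k) with hu
  have hchain : ∀ x : ℕ → Bool, ∀ n m, n ≤ m →
      closedBall (u x m) ((D m).2.1) ⊆ closedBall (u x n) ((D n).2.1) := by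
    intro x n m hnm
    induction m, hnm using Nat.le_induction with
    | base => exact subset_rfl
    | succ m hm ih =>
      refine subset_trans ?_ ih
      have : u x (m+1) = (D (m+1)).1 (Fin.snoc (fun k : Fin m => x ↑k) (x m)) := by
        rw [hu]
        simp only []
        rw [my_res_succ]
      rw [this]
      exact hnest m _ (x m)
  have hself : ∀ (x : ℕ → Bool) m, u x m ∈ closedBall (u x m) ((D m).2.1) :=
    fun x m => mem_closedBall_self (le_of_lt (hpos m))
  have hcauchy : ∀ x : ℕ → Bool, CauchySeq (u x) := by
    intro x
    refine cauchySeq_of_le_geometric (1/2) 1 (by norm_num) (fun n => ?_)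
    have := hchain x n (n+1) (Nat.le_succ n) (hself x (n+1))
    rw [mem_closedBall] at this
    rw [dist_comm, one_mul]
    calc dist (u x (n+1)) (u x n) ≤ (D n).2.1 := this
      _ ≤ (1/2)^n := by
        cases n with
        | zero =>
          have hD0 : (D 0).2.1 = 1 := rfl
          rw [hD0]
          norm_num
        | succ n => exact le_trans (hle n) (by norm_num)
  choose Φ hΦ using fun x => cauchySeq_tendsto_of_complete (hcauchy x)
  have hΦmem : ∀ (x : ℕ → Bool) n, Φ x ∈ closedBall (u x n) ((D n).2.1) := by
    intro x n
    exact Metric.isClosed_closedBall.mem_of_tendsto (hΦ x)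
      (Filter.eventually_atTop.2 ⟨n, fun m hm => hchain x n m hm (hself x m)⟩)
  refine ⟨Φ, fun x y hxy hmem => ?_⟩
  obtain ⟨k, hk⟩ : ∃ k, x k ≠ y k := by
    by_contra h
    push_neg at h
    exact hxy (funext h)
  rw [mem_iUnion] at hmem
  obtain ⟨n, hn⟩ := hmem
  have hkm : k < (max n k) + 1 := Nat.lt_succ_of_le (le_max_right n k)
  have hne : (fun j : Fin ((max n k)+1) => x ↑j) ≠ (fun j : Fin ((max n k)+1) => y ↑j) := by
    intro h
    exact hk (congrFun h ⟨k, hkm⟩)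
  have := hsep (max n k) _ _ hne (Φ x) (Φ y)
    (mem_closedBall.1 (hΦmem x ((max n k)+1))) (mem_closedBall.1 (hΦmem y ((max n k)+1)))
  exact this (hmono (Nat.le_succ_of_le (le_max_left n k)) hn)
end Grp

/-- A meagre subgroup of a Polish group has index the continuum. -/
theorem meagre_subgroup_index_continuum
    {G : Type*} [Group G] [TopologicalSpace G] [IsTopologicalGroup G] [PolishSpace G]
    (H : Subgroup G) (hH : IsMeagre (H : Set G)) :
    Cardinal.mk (G ⧸ H) = Cardinal.continuum := by
  letI := TopologicalSpace.upgradeIsCompletelyMetrizable G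
  obtain ⟨S, hS_nd, hS_ct, hsub⟩ := isMeagre_iff_countable_union_isNowhereDense.1 hH
  obtain ⟨f, hf⟩ := (hS_ct.insert ∅).exists_eq_range (Set.insert_nonempty _ _)
  have hfnwd : ∀ n, IsNowhereDense (f n) := by
    intro n
    have hmem : f n ∈ insert ∅ S := hf ▸ Set.mem_range_self n
    rcases Set.mem_insert_iff.1 hmem with h | h
    · rw [h]; exact isNowhereDense_empty
    · exact hS_nd _ h
  let F : ℕ → Set G := fun n => Nat.rec (closure (f 0)) (fun n Fn => Fn ∪ closure (f (n+1))) n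
  have hFsucc : ∀ n, F (n+1) = F n ∪ closure (f (n+1)) := fun n => rfl
  have hFcl : ∀ n, IsClosed (F n) := by
    intro n
    induction n with
    | zero => exact isClosed_closure
    | succ n ih => exact ih.union isClosed_closure
  have hFint : ∀ n, interior (F n) = ∅ := by
    intro n
    induction n with
    | zero => exact isClosed_closure.isNowhereDense_iff.1 (hfnwd 0).closure
    | succ n ih =>
      exact my_interior_union_empty (hFcl n) ih
        (isClosed_closure.isNowhereDense_iff.1 (hfnwd (n+1)).closure)
  have hFnwd : ∀ n, IsNowhereDense (F n) := fun n => (hFcl n).isNowhereDense_iff.2 (hFint n)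
  have hmono : Monotone F := monotone_nat_of_le_succ (fun n => Set.subset_union_left)
  have hcover : (H : Set G) ⊆ ⋃ n, F n := by
    have hsub' : ∀ n, f n ⊆ F n := by
      intro n
      induction n with
      | zero => exact subset_closure
      | succ n ih => exact subset_trans subset_closure Set.subset_union_right
    intro x hx
    obtain ⟨s, hsS, hxs⟩ := hsub hx
    have : s ∈ Set.range f := hf ▸ (Set.mem_insert_iff.2 (Or.inr hsS))
    obtain ⟨n, rfl⟩ := this
    exact Set.mem_iUnion.2 ⟨n, hsub' n hxs⟩
  obtain ⟨Φ, hΦ⟩ := my_exists_Phi hFcl hFnwd hmono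
  have hinj : Function.Injective (fun x : ℕ → Bool => (QuotientGroup.mk (Φ x) : G ⧸ H)) := by
    intro x y hxy
    by_contra hne
    exact hΦ x y hne (hcover (QuotientGroup.eq.1 hxy))
  have hlb : Cardinal.continuum ≤ Cardinal.mk (G ⧸ H) := by
    have hle := Cardinal.lift_mk_le'.2 ⟨⟨_, hinj⟩⟩
    have hcb : Cardinal.mk (ℕ → Bool) = Cardinal.continuum := by
      rw [← Cardinal.power_def, Cardinal.mk_bool, Cardinal.mk_nat, Cardinal.two_power_aleph0]
    rw [hcb, Cardinal.lift_continuum, Cardinal.lift_uzero] at hle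
    exact hle
  have hub : Cardinal.mk (G ⧸ H) ≤ Cardinal.continuum := by
    obtain ⟨g, -, hgsurj⟩ := PolishSpace.exists_nat_nat_continuous_surjective G
    have hsurj : Function.Surjective (fun x : ℕ → ℕ => (QuotientGroup.mk (g x) : G ⧸ H)) := by
      intro q
      obtain ⟨a, rfl⟩ := QuotientGroup.mk_surjective q
      obtain ⟨x, rfl⟩ := hgsurj a
      exact ⟨x, rfl⟩
    have hle := Cardinal.lift_mk_le'.2 ⟨Function.Embedding.ofSurjective _ hsurj⟩
    have hcn : Cardinal.mk (ℕ → ℕ) = Cardinal.continuum := by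
      rw [← Cardinal.power_def, Cardinal.mk_nat, Cardinal.aleph0_power_aleph0]
    rw [hcn, Cardinal.lift_continuum, Cardinal.lift_uzero] at hle
    exact hle
  exact le_antisymm hub hlb
end

section
/- Let G be a Polish group, let X be a comeagre subset of G, let O be a nonempty open subset of G, and let H be a subgroup of G such that X ∩ O ⊆ H. Then H is an open subgroup of G. -/
/-- A subgroup of a Polish group containing the intersection of a comeagre set with a
nonempty open set is open. -/
theorem isOpen_of_comeagre_inter_open_subset
    {G : Type*} [Group G] [TopologicalSpace G] [IsTopologicalGroup G] [PolishSpace G]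
    (X : Set G) (hX : X ∈ residual G)
    (O : Set G) (hO : IsOpen O) (hO' : O.Nonempty)
    (H : Subgroup G) (hH : X ∩ O ⊆ (H : Set G)) :
    IsOpen (H : Set G) := by
  letI := TopologicalSpace.upgradeIsCompletelyMetrizable G
  obtain ⟨x₀, hx₀⟩ := hO'
  apply Subgroup.isOpen_of_mem_nhds (g := (1 : G))
  have key : ∀ g ∈ (fun y => y * x₀⁻¹) '' O, g ∈ (H : Set G) := by
    rintro g ⟨o, ho, rfl⟩
    set g := o * x₀⁻¹ with hg
    have h1 : (fun y => g⁻¹ * y) ⁻¹' X ∈ residual G := by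
      have hX' := hX
      rw [← (Homeomorph.mulLeft g⁻¹).residual_map_eq (α := G), Filter.mem_map] at hX'
      exact hX'
    have h2 : X ∩ (fun y => g⁻¹ * y) ⁻¹' X ∈ residual G := Filter.inter_mem hX h1
    have hdense : Dense (X ∩ (fun y => g⁻¹ * y) ⁻¹' X) := dense_of_mem_residual h2
    have hWopen : IsOpen (O ∩ (fun y => g⁻¹ * y) ⁻¹' O) :=
      hO.inter (hO.preimage (by continuity))
    have hWne : (O ∩ (fun y => g⁻¹ * y) ⁻¹' O).Nonempty :=
      ⟨o, ho, by simp [hg, mul_assoc, hx₀]⟩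
    obtain ⟨y, hyd, hyW⟩ := hdense.exists_mem_open hWopen hWne
    have hy : y ∈ (H : Set G) := hH ⟨hyd.1, hyW.1⟩
    have hgy : g⁻¹ * y ∈ (H : Set G) := hH ⟨hyd.2, hyW.2⟩
    have heq : g = y * (g⁻¹ * y)⁻¹ := by group
    show o * x₀⁻¹ ∈ (H : Set G)
    rw [← hg, heq]
    exact mul_mem hy (inv_mem hgy)
  refine Filter.mem_of_superset ?_ key
  have : IsOpen ((fun y => y * x₀⁻¹) '' O) :=
    (Homeomorph.mulRight x₀⁻¹).isOpenMap O hO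
  exact this.mem_nhds ⟨x₀, hx₀, by simp⟩
end

section
/- Let G be a Polish group, let H be a subgroup of G whose index is strictly less than 2^ℵ₀ (i.e. the set G/H of left cosets has cardinality strictly less than the continuum), and let Y be a comeagre subset of G. Then H ∩ Y is nonempty. -/
open Set Filter Topology

section HHLS

variable {G : Type*}


variable {G : Type*}

/-- Pair shrinking: given two nonempty open sets and a dense open set `W`, we can shrink the
two open sets so that all "quotients" land in `W`. -/
lemma hhls_pair_shrink [Group G] [TopologicalSpace G] [IsTopologicalGroup G]
    {U V W : Set G} (hU : IsOpen U) (hUne : U.Nonempty) (hV : IsOpen V) (hVne : V.Nonempty)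
    (hW : IsOpen W) (hWd : Dense W) :
    ∃ U' V' : Set G, IsOpen U' ∧ U'.Nonempty ∧ U' ⊆ U ∧ IsOpen V' ∧ V'.Nonempty ∧ V' ⊆ V ∧
      ∀ p ∈ U', ∀ q ∈ V', p⁻¹ * q ∈ W := by
  obtain ⟨a, ha⟩ := hUne
  have himg : IsOpen ((fun q => a⁻¹ * q) '' V) := (Homeomorph.mulLeft a⁻¹).isOpenMap V hV
  obtain ⟨c, hcV, hcW⟩ := hWd.inter_open_nonempty _ himg (hVne.image _)
  obtain ⟨b, hbV, rfl⟩ := hcV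
  have hcont : Continuous fun z : G × G => z.1⁻¹ * z.2 :=
    (continuous_fst.inv).mul continuous_snd
  have hS : IsOpen {z : G × G | z.1⁻¹ * z.2 ∈ W} := hW.preimage hcont
  obtain ⟨u, v, hu, hv, hau, hbv, huv⟩ := isOpen_prod_iff.mp hS a b hcW
  refine ⟨U ∩ u, V ∩ v, hU.inter hu, ⟨a, ha, hau⟩, inter_subset_left, hV.inter hv,
    ⟨b, hbV, hbv⟩, inter_subset_left, fun p hp q hq => ?_⟩
  exact huv (Set.mk_mem_prod hp.2 hq.2)

/-- Iterated shrinking over a list of pairs of indices. -/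
lemma hhls_multi_shrink [Group G] [TopologicalSpace G] [IsTopologicalGroup G]
    {ι : Type*} [DecidableEq ι] (L : List (ι × ι)) {W : Set G} (hW : IsOpen W) (hWd : Dense W)
    (U : ι → Set G) (hU : ∀ i, IsOpen (U i) ∧ (U i).Nonempty) :
    ∃ U' : ι → Set G, (∀ i, IsOpen (U' i) ∧ (U' i).Nonempty ∧ U' i ⊆ U i) ∧
      ∀ p ∈ L, p.1 ≠ p.2 → ∀ a ∈ U' p.1, ∀ b ∈ U' p.2, a⁻¹ * b ∈ W := by
  induction L generalizing U with
  | nil => exact ⟨U, fun i => ⟨(hU i).1, (hU i).2, subset_rfl⟩, by simp⟩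
  | cons p L ih =>
    obtain ⟨U', hU', hsep⟩ := ih U hU
    by_cases hp : p.1 = p.2
    · refine ⟨U', hU', ?_⟩
      rintro q hq hq12
      rcases List.mem_cons.mp hq with rfl | hq
      · exact absurd hp hq12
      · exact hsep q hq hq12
    · obtain ⟨A, B, hA, hAne, hAsub, hB, hBne, hBsub, hAB⟩ :=
        hhls_pair_shrink (hU' p.1).1 (hU' p.1).2.1 (hU' p.2).1 (hU' p.2).2.1 hW hWd
      set U'' : ι → Set G := Function.update (Function.update U' p.1 A) p.2 B with hU''def
      have h1 : U'' p.1 = A := by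
        rw [hU''def, Function.update_of_ne hp, Function.update_self]
      have h2 : U'' p.2 = B := by rw [hU''def, Function.update_self]
      have hsub : ∀ i, U'' i ⊆ U' i := by
        intro i
        by_cases hi2 : i = p.2
        · subst hi2; rw [h2]; exact hBsub
        · by_cases hi1 : i = p.1
          · subst hi1; rw [h1]; exact hAsub
          · rw [hU''def, Function.update_of_ne hi2, Function.update_of_ne hi1]
      refine ⟨U'', ?_, ?_⟩
      · intro i
        by_cases hi2 : i = p.2
        · subst hi2; rw [h2]; exact ⟨hB, hBne, hBsub.trans (hU' _).2.2⟩
        · by_cases hi1 : i = p.1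
          · subst hi1; rw [h1]; exact ⟨hA, hAne, hAsub.trans (hU' _).2.2⟩
          · rw [hU''def, Function.update_of_ne hi2, Function.update_of_ne hi1]
            exact ⟨(hU' i).1, (hU' i).2.1, (hU' i).2.2⟩
      · rintro q hq hq12 a haq b hbq
        rcases List.mem_cons.mp hq with rfl | hq
        · rw [h1] at haq; rw [h2] at hbq
          exact hAB a haq b hbq
        · exact hsep q hq hq12 a (hsub _ haq) b (hsub _ hbq)

/-- Shrink a nonempty open set to a nonempty open subset with closure inside it and
small diameter. -/
lemma hhls_small_shrink {X : Type*} [MetricSpace X] {U : Set X} (hU : IsOpen U)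
    (hUne : U.Nonempty) {ε : ℝ} (hε : 0 < ε) :
    ∃ S : Set X, IsOpen S ∧ S.Nonempty ∧ closure S ⊆ U ∧
      EMetric.diam S ≤ ENNReal.ofReal ε := by
  obtain ⟨c, hc⟩ := hUne
  obtain ⟨r, hr, hrU⟩ := Metric.nhds_basis_closedBall.mem_iff.mp (hU.mem_nhds hc)
  set s := min r (ε / 2) with hs
  have hs0 : 0 < s := lt_min hr (by linarith)
  refine ⟨Metric.ball c s, Metric.isOpen_ball, ⟨c, Metric.mem_ball_self hs0⟩, ?_, ?_⟩
  · exact Metric.closure_ball_subset_closedBall.trans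
      ((Metric.closedBall_subset_closedBall (min_le_left _ _)).trans hrU)
  · rw [← Metric.emetric_ball]
    refine le_trans EMetric.diam_ball ?_
    rw [← ENNReal.ofReal_ofNat, ← ENNReal.ofReal_mul (by norm_num)]
    apply ENNReal.ofReal_le_ofReal
    calc 2 * s ≤ 2 * (ε / 2) := by
          have := min_le_right r (ε / 2); nlinarith
      _ = ε := by ring


/-- One level of the construction: a finite family of nonempty open sets can be shrunk so
that all distinct-pair quotients land in a given dense open set, with closures inside the
original sets and small diameters. -/
lemma hhls_level [MetricSpace G] [Group G] [IsTopologicalGroup G]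
    {ι : Type} [Fintype ι] [DecidableEq ι] {W : Set G} (hW : IsOpen W) (hWd : Dense W)
    {ε : ℝ} (hε : 0 < ε) (U : ι → Set G) (hU : ∀ i, IsOpen (U i) ∧ (U i).Nonempty) :
    ∃ U' : ι → Set G, (∀ i, IsOpen (U' i) ∧ (U' i).Nonempty ∧ closure (U' i) ⊆ U i ∧
        EMetric.diam (U' i) ≤ ENNReal.ofReal ε) ∧
      ∀ i j, i ≠ j → ∀ a ∈ U' i, ∀ b ∈ U' j, a⁻¹ * b ∈ W := by
  obtain ⟨U₁, hU₁, hsep⟩ :=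
    hhls_multi_shrink (Finset.univ : Finset (ι × ι)).toList hW hWd U hU
  choose U₂ hO hNe hCl hDiam using fun i => hhls_small_shrink (hU₁ i).1 (hU₁ i).2.1 hε
  refine ⟨U₂, fun i => ⟨hO i, hNe i, (hCl i).trans (hU₁ i).2.2, hDiam i⟩, ?_⟩
  intro i j hij a ha b hb
  exact hsep (i, j) (by simp [Finset.mem_toList]) hij a (hCl i (subset_closure ha))
    b (hCl j (subset_closure hb))

/-- The scheme associated to a level family. -/
def hhlsScheme (D : ℕ → (ℕ → Bool) → Set G) : List Bool → Set G :=
  fun l => D l.length (fun i => l.getD i false)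

theorem List.getD_res {α : Type*} (x : ℕ → α) (d : α) (n i : ℕ) (hi : i < n) :
    (PiNat.res x n).getD i d = x (n - 1 - i) := by
  induction n generalizing i with
  | zero => exact absurd hi (Nat.not_lt_zero i)
  | succ n ih =>
    cases i with
    | zero => simp [PiNat.res_succ]
    | succ j =>
      rw [PiNat.res_succ, List.getD_cons_succ, ih j (by omega)]
      congr 1
      omega

/-- The main Cantor-scheme construction: given a sequence of dense open sets `V n`, there is
a map `f` from Cantor space to `G` such that quotients of values at distinct points eventually
lie in every `V n`. -/
lemma hhls_scheme [MetricSpace G] [CompleteSpace G] [Group G] [IsTopologicalGroup G]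
    (V : ℕ → Set G) (hVo : ∀ n, IsOpen (V n)) (hVd : ∀ n, Dense (V n)) :
    ∃ f : (ℕ → Bool) → G, ∀ x y : ℕ → Bool, x ≠ y →
      ∃ N : ℕ, ∀ n ≥ N, (f x)⁻¹ * f y ∈ V n := by
  classical
  have key : ∀ (n : ℕ) (C : (ℕ → Bool) → Set G), (∀ z, IsOpen (C z) ∧ (C z).Nonempty) →
      ∃ C' : (ℕ → Bool) → Set G,
        (∀ z, IsOpen (C' z) ∧ (C' z).Nonempty) ∧
        (∀ z, closure (C' z) ⊆ C (fun i => if h : i + 1 < n + 1 then z (i + 1) else false)) ∧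
        (∀ z, EMetric.diam (C' z) ≤ ENNReal.ofReal ((1/2 : ℝ) ^ (n + 1))) ∧
        (∀ z w : ℕ → Bool, (∃ i, i < n + 1 ∧ z i ≠ w i) →
          ∀ p ∈ C' z, ∀ q ∈ C' w, p⁻¹ * q ∈ V (n + 1)) := by
    intro n C hC
    obtain ⟨U', hU', hsep⟩ := hhls_level (hVo (n+1)) (hVd (n+1))
      (pow_pos (by norm_num : (0:ℝ) < 1/2) (n+1))
      (fun s : Fin (n+1) → Bool =>
        C (fun i => if h : i + 1 < n + 1 then s ⟨i + 1, h⟩ else false))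
      (fun s => hC _)
    refine ⟨fun z => U' (fun i : Fin (n+1) => z i),
      fun z => ⟨(hU' _).1, (hU' _).2.1⟩, fun z => (hU' _).2.2.1,
      fun z => (hU' _).2.2.2, ?_⟩
    intro z w hzw p hp q hq
    refine hsep _ _ ?_ p hp q hq
    obtain ⟨i, hi, hne⟩ := hzw
    intro hcontra
    exact hne (congrFun hcontra ⟨i, hi⟩)
  choose step hstep using key
  obtain ⟨B, hBsucc⟩ : ∃ B : ℕ → {C : (ℕ → Bool) → Set G // ∀ z, IsOpen (C z) ∧ (C z).Nonempty},
      ∀ n, (B (n+1)).1 = step n (B n).1 (B n).2 :=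
    ⟨fun n => Nat.rec ⟨fun _ => Set.univ, fun _ => ⟨isOpen_univ, ⟨1, trivial⟩⟩⟩
      (fun m prev => ⟨step m prev.1 prev.2, (hstep m prev.1 prev.2).1⟩) n, fun _ => rfl⟩
  set D : ℕ → (ℕ → Bool) → Set G := fun n => (B n).1 with hDdef
  have hD : ∀ n z, IsOpen (D n z) ∧ (D n z).Nonempty := fun n => (B n).2
  have hpar : ∀ n z, closure (D (n+1) z) ⊆
      D n (fun i => if h : i + 1 < n + 1 then z (i + 1) else false) := by
    intro n z
    simp only [hDdef]
    rw [hBsucc n]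
    exact (hstep n (B n).1 (B n).2).2.1 z
  have hdiam : ∀ n z, EMetric.diam (D (n+1) z) ≤ ENNReal.ofReal ((1/2 : ℝ) ^ (n + 1)) := by
    intro n z
    simp only [hDdef]
    rw [hBsucc n]
    exact (hstep n (B n).1 (B n).2).2.2.1 z
  have hsep : ∀ n (z w : ℕ → Bool), (∃ i, i < n + 1 ∧ z i ≠ w i) →
      ∀ p ∈ D (n+1) z, ∀ q ∈ D (n+1) w, p⁻¹ * q ∈ V (n+1) := by
    intro n z w h
    simp only [hDdef]
    rw [hBsucc n]
    exact (hstep n (B n).1 (B n).2).2.2.2 z w h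
  -- the scheme
  have henc : ∀ (l : List Bool) (a : Bool),
      (fun i => if h : i + 1 < l.length + 1 then (a :: l).getD (i + 1) false else false)
        = fun i => l.getD i false := by
    intro l a
    funext i
    by_cases h : i + 1 < l.length + 1
    · rw [dif_pos h, List.getD_cons_succ]
    · rw [dif_neg h, List.getD_eq_default _ _ (by omega)]
  have hca : CantorScheme.ClosureAntitone (hhlsScheme D) := by
    intro l a
    have h := hpar l.length (fun i => (a :: l).getD i false)
    rw [henc l a] at h
    exact h
  have hne : ∀ l, (hhlsScheme D l).Nonempty := fun l => (hD _ _).2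
  have hmemD : ∀ (x : ℕ → Bool) (n : ℕ),
      hhlsScheme D (PiNat.res x n) = D n (fun i => (PiNat.res x n).getD i false) := by
    intro x n
    rw [hhlsScheme, PiNat.res_length]
  have hvd : CantorScheme.VanishingDiam (hhlsScheme D) := by
    intro x
    have h0 : Tendsto (fun n : ℕ => ENNReal.ofReal ((1/2 : ℝ) ^ n)) atTop (𝓝 0) := by
      rw [← ENNReal.ofReal_zero]
      exact (ENNReal.continuous_ofReal.tendsto _).comp
        (tendsto_pow_atTop_nhds_zero_of_lt_one (by norm_num) (by norm_num))
    refine tendsto_of_tendsto_of_tendsto_of_le_of_le' tendsto_const_nhds h0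
      (Eventually.of_forall fun n => zero_le) ?_
    rw [eventually_atTop]
    refine ⟨1, fun n hn => ?_⟩
    obtain ⟨m, rfl⟩ : ∃ m, n = m + 1 := ⟨n - 1, by omega⟩
    rw [hmemD x (m+1)]
    exact hdiam m _
  have huniv := hca.map_of_vanishingDiam hvd hne
  set f : (ℕ → Bool) → G :=
    fun x => (CantorScheme.inducedMap (hhlsScheme D)).2 ⟨x, by rw [huniv]; trivial⟩ with hfdef
  have hmem : ∀ (x : ℕ → Bool) (n : ℕ), f x ∈ hhlsScheme D (PiNat.res x n) :=
    fun x n => CantorScheme.map_mem _ n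
  refine ⟨f, ?_⟩
  intro x y hxy
  obtain ⟨i0, hi0⟩ : ∃ i, x i ≠ y i := by
    by_contra h
    push_neg at h
    exact hxy (funext h)
  refine ⟨i0 + 1, ?_⟩
  intro n hn
  obtain ⟨m, rfl⟩ : ∃ m, n = m + 1 := ⟨n - 1, by omega⟩
  have hx := hmem x (m+1)
  have hy := hmem y (m+1)
  rw [hmemD] at hx hy
  refine hsep m _ _ ⟨m - i0, by omega, ?_⟩ (f x) hx (f y) hy
  rw [List.getD_res x false (m+1) (m - i0) (by omega), List.getD_res y false (m+1) (m - i0) (by omega)]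
  have : m + 1 - 1 - (m - i0) = i0 := by omega
  rw [this]
  exact hi0

end HHLS

/-- In a Polish group, a subgroup of index strictly less than the continuum meets every
comeagre set. -/
theorem small_index_subgroup_meets_comeagre
    {G : Type*} [Group G] [TopologicalSpace G] [IsTopologicalGroup G] [PolishSpace G]
    (H : Subgroup G) (hH : Cardinal.mk (G ⧸ H) < Cardinal.continuum)
    (Y : Set G) (hY : Y ∈ residual G) :
    ((H : Set G) ∩ Y).Nonempty := by
  letI := TopologicalSpace.upgradeIsCompletelyMetrizable G
  by_contra hcon
  rw [Set.not_nonempty_iff_eq_empty] at hcon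
  obtain ⟨T, hTY, hTG, hTd⟩ := mem_residual.mp hY
  obtain ⟨W, hWo, rfl⟩ := hTG.eq_iInter_nat
  have hWd : ∀ n, Dense (W n) := fun n => hTd.mono (Set.iInter_subset W n)
  set V : ℕ → Set G := fun n => ⋂ k ∈ Finset.range (n+1), W k with hVdef
  have hVo : ∀ n, IsOpen (V n) := fun n => isOpen_biInter_finset fun k _ => hWo k
  have hVd : ∀ n, Dense (V n) := fun n =>
    dense_biInter_of_isOpen (fun k _ => hWo k) (Set.to_countable _) (fun k _ => hWd k)
  obtain ⟨f, hf⟩ := hhls_scheme V hVo hVd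
  have hinj : Function.Injective (fun x : ℕ → Bool => (QuotientGroup.mk (f x) : G ⧸ H)) := by
    intro x y hxy
    by_contra hne
    obtain ⟨N, hN⟩ := hf x y hne
    have hmemH : (f x)⁻¹ * f y ∈ H := QuotientGroup.eq.mp hxy
    have hmemY : (f x)⁻¹ * f y ∈ ⋂ n, W n := by
      rw [Set.mem_iInter]
      intro k
      have := hN (max N k) (le_max_left _ _)
      rw [hVdef] at this
      simp only [Set.mem_iInter] at this
      exact this k (Finset.mem_range.mpr (by omega))
    have : (f x)⁻¹ * f y ∈ (H : Set G) ∩ Y := ⟨hmemH, hTY hmemY⟩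
    rw [hcon] at this
    exact this
  have hcard : Cardinal.continuum ≤ Cardinal.mk (G ⧸ H) := by
    have h1 : Cardinal.mk (ℕ → Bool) = Cardinal.continuum := by
      rw [← Cardinal.two_power_aleph0]
      simp [Cardinal.mk_arrow]
    have h2 := Cardinal.lift_mk_le'.mpr ⟨⟨_, hinj⟩⟩
    rwa [h1, Cardinal.lift_continuum, Cardinal.lift_uzero] at h2
  exact absurd hcard hH.not_ge
end

section
/- Let G be a Polish group such that every normal subgroup N of G with N ≠ G is meagre as a subset of G. Then there is no surjective group homomorphism from G onto the infinite cyclic group ℤ. -/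
/-- If every proper normal subgroup of a Polish group is meagre, then the group does not
surject onto the infinite cyclic group ℤ. -/
theorem no_surjection_onto_int_of_proper_normal_meagre
    {G : Type*} [Group G] [TopologicalSpace G] [IsTopologicalGroup G] [PolishSpace G]
    (h : ∀ N : Subgroup G, N.Normal → N ≠ ⊤ → IsMeagre (N : Set G)) :
    ¬ ∃ φ : G →* Multiplicative ℤ, Function.Surjective φ := by
  rintro ⟨φ, hφ⟩
  -- the kernel is proper since φ is surjective onto a nontrivial group
  have hker : φ.ker ≠ ⊤ := by
    intro htop
    obtain ⟨g, hg⟩ := hφ (Multiplicative.ofAdd 1)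
    have hmem : g ∈ φ.ker := htop ▸ Subgroup.mem_top g
    rw [MonoidHom.mem_ker, hg] at hmem
    exact absurd hmem (by decide)
  have hm : IsMeagre (φ.ker : Set G) := h φ.ker (MonoidHom.normal_ker φ) hker
  -- each coset of the kernel is meagre
  have hcoset : ∀ g : G, IsMeagre ((g * ·) ⁻¹' (φ.ker : Set G)) := fun g =>
    hm.preimage_of_isOpenMap (continuous_mul_left g) (isOpenMap_mul_left g)
  -- pick preimages of each integer
  set e : ℕ ≃ ℤ := (Denumerable.eqv ℤ).symm with he
  have hsec : ∀ n : ℕ, ∃ g : G, φ g = Multiplicative.ofAdd (e n) := fun n =>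
    hφ (Multiplicative.ofAdd (e n))
  choose g hg using hsec
  -- G is a countable union of cosets of the kernel
  have key : IsMeagre (Set.univ : Set G) := by
    have hcover : (Set.univ : Set G) = ⋃ n : ℕ, ((g n * ·) ⁻¹' (φ.ker : Set G)) := by
      ext x
      simp only [Set.mem_univ, Set.mem_iUnion, Set.mem_preimage, SetLike.mem_coe,
        MonoidHom.mem_ker, true_iff]
      refine ⟨e.symm (Multiplicative.toAdd (φ x)⁻¹), ?_⟩
      rw [map_mul, hg, Equiv.apply_symm_apply]
      simp
    rw [hcover]
    exact isMeagre_iUnion fun n => hcoset (g n)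
  letI := TopologicalSpace.upgradeIsCompletelyMetrizable G
  have hdense : Dense ((Set.univ : Set G)ᶜ) := dense_of_mem_residual key
  rw [Set.compl_univ] at hdense
  exact Set.empty_ne_univ (by simpa [closure_empty] using hdense.closure_eq)
end

section
/- Let G be a Polish group with uncountable cofinality, i.e. whenever (H_n), n ∈ ℕ, is an increasing sequence of subgroups of G with ⋃_n H_n = G, then H_n = G for some n. Then for every open subgroup H of G there exists a finite subset F of G such that the subgroup generated by H ∪ F is all of G. -/
/-- A Polish group of uncountable cofinality is finitely generated over each of its open
subgroups. -/
theorem finitely_generated_over_open_subgroup_of_uncountable_cofinality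
    {G : Type*} [Group G] [TopologicalSpace G] [IsTopologicalGroup G] [PolishSpace G]
    (hcof : ∀ H : ℕ → Subgroup G, Monotone H → (∀ g : G, ∃ n, g ∈ H n) →
      ∃ n, H n = ⊤) :
    ∀ H : Subgroup G, IsOpen (H : Set G) →
      ∃ F : Finset G, Subgroup.closure ((H : Set G) ∪ (F : Set G)) = ⊤ := by
  intro H hH
  classical
  haveI : Nonempty G := ⟨1⟩
  obtain ⟨D, hDcount, hDdense⟩ := TopologicalSpace.exists_countable_dense G
  -- enumerate a dense sequence
  let g : ℕ → G := TopologicalSpace.denseSeq G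
  have hg : DenseRange g := TopologicalSpace.denseRange_denseSeq G
  -- the chain of subgroups
  let K : ℕ → Subgroup G := fun n => Subgroup.closure ((H : Set G) ∪ (g '' Set.Iio n))
  have hmono : Monotone K := by
    intro m n hmn
    apply Subgroup.closure_mono
    apply Set.union_subset_union_right
    exact Set.image_mono fun x hx => lt_of_lt_of_le hx hmn
  have hcover : ∀ x : G, ∃ n, x ∈ K n := by
    intro x
    -- x • H is open and nonempty, so contains some g n
    have hopen : IsOpen ((x * ·) '' (H : Set G)) :=
      (Homeomorph.mulLeft x).isOpen_image.mpr hH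
    have hne : ((x * ·) '' (H : Set G)).Nonempty := ⟨x * 1, 1, H.one_mem, rfl⟩
    obtain ⟨n, hn⟩ := hg.exists_mem_open hopen hne
    obtain ⟨h, hh, hxh⟩ := hn
    refine ⟨n + 1, ?_⟩
    have hgn : g n ∈ K (n + 1) :=
      Subgroup.subset_closure (Set.mem_union_right _ ⟨n, by simp, rfl⟩)
    have hhm : h ∈ K (n + 1) :=
      Subgroup.subset_closure (Set.mem_union_left _ hh)
    have : x = g n * h⁻¹ := by
      rw [← hxh]; group
    rw [this]
    exact mul_mem hgn (inv_mem hhm)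
  obtain ⟨n, hn⟩ := hcof K hmono hcover
  refine ⟨(Finset.range n).image g, ?_⟩
  have : (((Finset.range n).image g : Finset G) : Set G) = g '' Set.Iio n := by
    ext y; simp [Set.mem_Iio]
  rw [this]
  exact hn
end

section
/- Let G be a topological group whose underlying topological space is a Baire space, and suppose some conjugacy class C of G is comeagre in G. Then every normal subgroup N of G with N ≠ G is meagre in G; in fact, every such N is disjoint from C. -/
/-- If a Baire topological group has a comeagre conjugacy class, then every proper normal
subgroup is meagre, and in fact disjoint from that conjugacy class. -/
theorem proper_normal_meagre_of_comeagre_conjClass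
    {G : Type*} [Group G] [TopologicalSpace G] [IsTopologicalGroup G] [BaireSpace G]
    (g : G) (C : Set G) (hC : C = {x : G | IsConj g x}) (hcom : C ∈ residual G) :
    ∀ N : Subgroup G, N.Normal → N ≠ ⊤ →
      IsMeagre (N : Set G) ∧ Disjoint (N : Set G) C := by
  intro N hN hNtop
  have hdisj : Disjoint (N : Set G) C := by
    rw [Set.disjoint_left]
    intro x hxN hxC
    -- g is conjugate to x, so g ∈ N
    rw [hC] at hxC
    rw [Set.mem_setOf_eq, isConj_iff] at hxC
    obtain ⟨c, hc⟩ := hxC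
    have hg : g ∈ N := by
      have := hN.conj_mem x hxN c⁻¹
      have hx : c⁻¹ * x * c⁻¹⁻¹ = g := by rw [← hc]; group
      rwa [hx] at this
    -- hence C ⊆ N, so N is comeagre
    have hsub : C ⊆ (N : Set G) := by
      rw [hC]
      intro y hy
      rw [Set.mem_setOf_eq, isConj_iff] at hy
      obtain ⟨c, hc⟩ := hy
      rw [← hc]
      exact hN.conj_mem g hg c
    have hNres : (N : Set G) ∈ residual G := Filter.mem_of_superset hcom hsub
    -- pick a ∉ N
    obtain ⟨a, haN⟩ : ∃ a, a ∉ N := by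
      by_contra h
      push_neg at h
      exact hNtop (Subgroup.ext fun y => ⟨fun _ => trivial, fun _ => h y⟩)
    -- a • N is also residual
    have hmap : ((a * ·) '' (N : Set G)) ∈ residual G := by
      rw [← (Homeomorph.mulLeft a).residual_map_eq]
      exact Filter.image_mem_map hNres
    have hboth := dense_of_mem_residual (Filter.inter_mem hNres hmap)
    obtain ⟨y, hyN, z, hzN, hzy⟩ := hboth.nonempty
    exact haN (by
      simp only at hzy
      have : a = y * z⁻¹ := by rw [← hzy]; group
      rw [this]
      exact N.mul_mem hyN (N.inv_mem hzN))
  refine ⟨?_, hdisj⟩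
  have hsub : (N : Set G) ⊆ Cᶜ := Set.disjoint_left.mp hdisj
  have : IsMeagre Cᶜ := by
    rw [IsMeagre, compl_compl]
    exact hcom
  exact this.mono hsub
end
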